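/- Let ρ > 1 and suppose the real sequence (aₙ) satisfies the linear recurrence aₙ₊₁ = (1/ρ + ρ - 1)·aₙ - aₙ₋₁ for all n ≥ 1, with a₀ > 0 and (a₀, a₁) ≠ (0,0). If 1 < ρ < φ+1 (φ the golden ratio), then there exists ℓ ∈ ℕ with a_ℓ < 0. -/
import Mathlib

open Filter Topology Finset

/-- A nonzero solution of the recurrence aₙ₊₁ = (1/ρ + ρ - 1)aₙ - aₙ₋₁ with a₀ > 0
eventually becomes negative when 1 < ρ < φ + 1. -/
theorem recurrence_becomes_negative (ρ : ℝ) (h1 : 1 < ρ)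
    (h2 : ρ < (1 + Real.sqrt 5) / 2 + 1) (a : ℕ → ℝ)
    (hrec : ∀ n : ℕ, a (n + 2) = (1 / ρ + ρ - 1) * a (n + 1) - a n)
    (ha0 : 0 < a 0) (hne : (a 0, a 1) ≠ (0, 0)) :
    ∃ ℓ : ℕ, a ℓ < 0 := by
  by_contra hcon
  push_neg at hcon
  have hρ0 : 0 < ρ := by linarith
  have hinv : ρ * (1 / ρ) = 1 := by field_simp
  set c : ℝ := 1 / ρ + ρ - 1 with hcdef
  have hs0 : 0 ≤ Real.sqrt 5 := Real.sqrt_nonneg 5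
  have hs : Real.sqrt 5 ^ 2 = 5 := Real.sq_sqrt (by norm_num)
  have hs2 : 2 < Real.sqrt 5 := by nlinarith
  have hc1 : 1 < c := by
    rw [hcdef]
    nlinarith [sq_nonneg (ρ - 1), mul_pos hρ0 hρ0]
  have hc2 : c < 2 := by
    rw [hcdef]
    have hf1 : 0 < 2*ρ - 3 + Real.sqrt 5 := by linarith
    have hf2 : 0 < 3 + Real.sqrt 5 - 2*ρ := by linarith
    nlinarith [mul_pos hf1 hf2]
  set e : ℝ := a 0 ^ 2 + a 1 ^ 2 - c * a 0 * a 1 with hedef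
  have he : 0 < e := by
    rw [hedef]
    nlinarith [sq_nonneg (a 0 - a 1), sq_nonneg (a 0 + a 1), mul_pos ha0 ha0]
  have hEc : ∀ n, a n ^ 2 + a (n+1) ^ 2 - c * a n * a (n+1) = e := by
    intro n
    induction n with
    | zero => rfl
    | succ k ih =>
      have hr : a (k+1+1) = c * a (k+1) - a k := hrec k
      rw [hr]
      linear_combination ih
  set d : ℝ := 2 - c with hddef
  have hd : 0 < d := by rw [hddef]; linarith
  have hcpos : 0 < c := by linarith
  have hB : ∀ n, d * a n ≤ d + 2 * e := by
    intro n
    have h := hEc n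
    nlinarith [mul_nonneg hcpos.le (sq_nonneg (a n - a (n+1))),
      mul_nonneg hd.le (sq_nonneg (a n - 1)),
      mul_nonneg hd.le (sq_nonneg (a (n+1)))]
  set T : ℕ → ℝ := fun N => ∑ i ∈ Finset.range N, a i with hTdef
  have hTsucc : ∀ N, T (N+1) = T N + a N := by
    intro N; simp [hTdef, Finset.sum_range_succ]
  have hT1 : T 1 = a 0 := by simp [hTdef]
  have hmono : Monotone T := by
    apply monotone_nat_of_le_succ
    intro n; rw [hTsucc]; linarith [hcon n]
  have hI : ∀ N, a (N+1) - a N + d * T (N+1) = a 1 - a 0 + d * T 1 := by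
    intro N
    induction N with
    | zero => rfl
    | succ k ih =>
      have hr : a (k+1+1) = c * a (k+1) - a k := hrec k
      rw [hr, hTsucc (k+1)]
      linear_combination ih + a (k+1) * hddef
  set C0 : ℝ := a 1 - a 0 + d * a 0 with hC0def
  have hC : ∀ N, d * T (N+1) = C0 - a (N+1) + a N := by
    intro N
    have h := hI N
    rw [hT1] at h
    rw [hC0def]; linarith
  set K : ℝ := (d * C0 + d + 2 * e) / (d * d) with hKdef
  have hK1 : ∀ N, T (N+1) ≤ K := by
    intro N
    have h1' := hC N
    have h3' := hcon (N+1)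
    have h4' := hB N
    have h5' : d * (d * T (N+1)) ≤ d * (C0 + a N) :=
      mul_le_mul_of_nonneg_left (by linarith) hd.le
    rw [hKdef, le_div_iff₀ (by positivity : (0:ℝ) < d * d)]
    nlinarith [h5', h4']
  have hK : ∀ N, T N ≤ K := by
    intro N
    rcases N with _ | n
    · calc T 0 ≤ T 1 := hmono (by norm_num)
        _ ≤ K := hK1 0
    · exact hK1 n
  have hbdd : BddAbove (Set.range T) := ⟨K, by rintro x ⟨N, rfl⟩; exact hK N⟩
  have hTlim : Tendsto T atTop (𝓝 (⨆ n, T n)) := tendsto_atTop_ciSup hmono hbdd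
  have hTlim1 : Tendsto (fun n => T (n+1)) atTop (𝓝 (⨆ n, T n)) :=
    hTlim.comp (tendsto_add_atTop_nat 1)
  have hsub : Tendsto (fun n => T (n+1) - T n) atTop (𝓝 ((⨆ n, T n) - ⨆ n, T n)) :=
    hTlim1.sub hTlim
  rw [sub_self] at hsub
  have haa : Tendsto a atTop (𝓝 0) :=
    hsub.congr (fun n => by rw [hTsucc]; ring)
  have ha1 : Tendsto (fun n => a (n+1)) atTop (𝓝 0) :=
    haa.comp (tendsto_add_atTop_nat 1)
  have hlim : Tendsto (fun n => a n ^ 2 + a (n+1) ^ 2 - c * a n * a (n+1)) atTop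
      (𝓝 ((0:ℝ) ^ 2 + (0:ℝ) ^ 2 - c * 0 * 0)) :=
    ((haa.pow 2).add (ha1.pow 2)).sub ((tendsto_const_nhds.mul haa).mul ha1)
  have hconste : Tendsto (fun _ : ℕ => e) atTop (𝓝 ((0:ℝ) ^ 2 + (0:ℝ) ^ 2 - c * 0 * 0)) :=
    hlim.congr (fun n => hEc n)
  have : e = (0:ℝ) ^ 2 + (0:ℝ) ^ 2 - c * 0 * 0 :=
    tendsto_nhds_unique tendsto_const_nhds hconste
  norm_num at this
  linarith
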